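/- Let s ∈ ℝ ∖ {t_1, …, t_N} be such that F(s) = ε for some ε > 0. For c > 0 define G_c(x) = F(x) + c/(s − x). Then there exist δ > 0 and a function λ : (0, δ) → ℝ with λ(c) ∉ {t_1, …, t_N, s}, G_c(λ(c)) = 0 for all c ∈ (0, δ), λ(c) → s as c → 0⁺, and lim_{c→0⁺} (λ(c) − s)/c = 1/ε. In other words, the new zero created near the added pole s satisfies λ(c) = s + c/ε + o(c) as c → 0⁺. -/

import Mathlib

open Filter
open scoped Topology

/-- Perturbation of a level point of `F(x) = 1 + ∑_{n<N} a n / (t n - x)`: if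
`F(s) = ε > 0` at a non-pole point `s`, then for small `c > 0` the perturbed function
`G_c(x) = F(x) + c/(s - x)` has a zero `lam c` near `s` (distinct from `s` and from the
poles) with `lam c → s` and `(lam c - s)/c → 1/ε` as `c → 0⁺`, i.e.
`lam c = s + c/ε + o(c)`. -/
theorem new_zero_near_added_pole
    (N : ℕ) (hN : 1 ≤ N) (t : ℕ → ℝ) (ht : ∀ i j, i < j → j < N → t i < t j)
    (a : ℕ → ℝ) (ha : ∀ n < N, 0 < a n)
    (F : ℝ → ℝ) (hF : ∀ x, F x = 1 + ∑ n ∈ Finset.range N, a n / (t n - x))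
    (s : ℝ) (hs : ∀ n < N, s ≠ t n) (ε : ℝ) (hε : 0 < ε) (hFs : F s = ε) :
    ∃ δ > (0 : ℝ), ∃ lam : ℝ → ℝ,
      (∀ c ∈ Set.Ioo (0 : ℝ) δ,
        (∀ n < N, lam c ≠ t n) ∧ lam c ≠ s ∧ F (lam c) + c / (s - lam c) = 0) ∧
      Filter.Tendsto lam (nhdsWithin 0 (Set.Ioi 0)) (nhds s) ∧
      Filter.Tendsto (fun c => (lam c - s) / c) (nhdsWithin 0 (Set.Ioi 0)) (nhds (1 / ε)) := by
  -- F has a strict derivative at s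
  have hFderiv : HasStrictDerivAt F
      (∑ n ∈ Finset.range N, a n / (t n - s) ^ 2) s := by
    have hsum : HasStrictDerivAt (fun x => ∑ n ∈ Finset.range N, a n / (t n - x))
        (∑ n ∈ Finset.range N, a n / (t n - s) ^ 2) s := by
      apply HasStrictDerivAt.fun_sum
      intro n hn
      have hn' : n < N := Finset.mem_range.mp hn
      have hd : t n - s ≠ 0 := sub_ne_zero.mpr (fun h => hs n hn' h.symm)
      have : HasStrictDerivAt (fun x => a n / (t n - x))
          ((0 * (t n - s) - a n * (0 - 1)) / (t n - s) ^ 2) s :=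
        (hasStrictDerivAt_const s (a n)).div
          ((hasStrictDerivAt_const s (t n)).sub (hasStrictDerivAt_id s)) hd
      refine this.congr_deriv ?_
      ring
    have : HasStrictDerivAt (fun x => 1 + ∑ n ∈ Finset.range N, a n / (t n - x))
        (∑ n ∈ Finset.range N, a n / (t n - s) ^ 2) s := by
      simpa using hsum.const_add (1:ℝ)
    exact this.congr_of_eventuallyEq (Filter.Eventually.of_forall fun x => (hF x).symm)
  -- h x = (x - s) * F x has strict derivative ε at s
  set h : ℝ → ℝ := fun x => (x - s) * F x with hh_def
  have hh : HasStrictDerivAt h ε s := by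
    have hid : HasStrictDerivAt (fun y : ℝ => y - s) (1 - 0) s :=
      HasStrictDerivAt.sub (hasStrictDerivAt_id s) (hasStrictDerivAt_const s s)
    rw [sub_zero] at hid
    have h1 : HasStrictDerivAt (fun y => (y - s) * F y)
        (1 * F s + (s - s) * (∑ n ∈ Finset.range N, a n / (t n - s) ^ 2)) s :=
      HasStrictDerivAt.mul hid hFderiv
    have heq : 1 * F s + (s - s) * (∑ n ∈ Finset.range N, a n / (t n - s) ^ 2) = ε := by
      rw [hFs]; ring
    rw [heq] at h1
    exact h1
  have hε' : (ε : ℝ) ≠ 0 := ne_of_gt hε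
  set g : ℝ → ℝ := hh.localInverse h ε s hε' with hg_def
  have hhs : h s = 0 := by simp [hh_def]
  have hginv : HasStrictDerivAt g ε⁻¹ 0 := by
    have := hh.to_localInverse (hf' := hε')
    rwa [hhs] at this
  have hg0 : g 0 = s := by
    have := (hh.hasStrictFDerivAt_equiv hε').localInverse_apply_image
    rwa [hhs] at this
  -- eventually properties near 0
  have hri : ∀ᶠ c in 𝓝 (0:ℝ), h (g c) = c := by
    have := (hh.hasStrictFDerivAt_equiv hε').eventually_right_inverse
    rwa [hhs] at this
  have hgc : ContinuousAt g 0 := by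
    have := hginv.hasDerivAt.continuousAt
    exact this
  -- the open set avoiding the poles
  have hU : ∀ᶠ c in 𝓝 (0:ℝ), ∀ n < N, g c ≠ t n := by
    have hUopen : IsOpen {x : ℝ | ∀ n < N, x ≠ t n} := by
      have : {x : ℝ | ∀ n < N, x ≠ t n} =
          ⋂ n ∈ Finset.range N, {t n}ᶜ := by
        ext x; simp [Set.mem_iInter]
      rw [this]
      exact isOpen_biInter_finset fun n _ => isOpen_compl_singleton
    have hsU : s ∈ {x : ℝ | ∀ n < N, x ≠ t n} := fun n hn => hs n hn
    have : {x : ℝ | ∀ n < N, x ≠ t n} ∈ 𝓝 s := hUopen.mem_nhds hsU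
    have := hgc (by rwa [hg0])
    exact this
  have hev : ∀ᶠ c in 𝓝 (0:ℝ), h (g c) = c ∧ ∀ n < N, g c ≠ t n := hri.and hU
  rcases Metric.eventually_nhds_iff.mp hev with ⟨δ, hδpos, hδ⟩
  refine ⟨δ, hδpos, g, ?_, ?_, ?_⟩
  · intro c hc
    have hdist : dist c (0:ℝ) < δ := by
      rw [Real.dist_eq, sub_zero, abs_of_pos hc.1]; exact hc.2
    obtain ⟨hhg, hnt⟩ := hδ hdist
    have hcne : c ≠ 0 := ne_of_gt hc.1
    have hne_s : g c ≠ s := by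
      intro he
      rw [he, hhs] at hhg
      exact hcne hhg.symm
    refine ⟨hnt, hne_s, ?_⟩
    have hsub : s - g c ≠ 0 := sub_ne_zero.mpr (Ne.symm hne_s)
    have : (g c - s) * F (g c) = c := hhg
    field_simp
    nlinarith [this]
  · have : Tendsto g (𝓝 0) (𝓝 s) := by
      have := hgc.tendsto; rwa [hg0] at this
    exact this.mono_left nhdsWithin_le_nhds
  · have hslope := hasDerivAt_iff_tendsto_slope.mp hginv.hasDerivAt
    have h2 : Tendsto (fun c => (g c - s) / c) (𝓝[≠] (0:ℝ)) (𝓝 ε⁻¹) := by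
      simpa [slope_fun_def_field, hg0] using hslope
    have h3 : Tendsto (fun c => (g c - s) / c) (𝓝[>] (0:ℝ)) (𝓝 ε⁻¹) :=
      h2.mono_left (nhdsWithin_mono _ fun x hx => ne_of_gt hx)
    simpa [one_div] using h3
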